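/- Let w be in the type D_n Weyl group (as signed permutations of {1,…,2n}), λ = λ(w) the associated partition, p = p(w), and λ' the conjugate partition of λ. Then λ'_k = λ_k + 1 for 1 ≤ k ≤ p, λ_{p+1} = p, and λ'_k = λ_{k+1} for p+1 ≤ k ≤ n-1. -/

import Mathlib

open Finset

def Wcond (n : ℕ) (w : Equiv.Perm (Fin (2*n))) : Prop :=
  ∀ i : Fin (2*n), ((w i : ℕ) + 1) + ((w i.rev : ℕ) + 1) = 2*n + 1

def Wpar (n : ℕ) (w : Equiv.Perm (Fin (2*n))) : Prop :=
  Even ((Finset.univ.filter (fun i : Fin (2*n) => (i : ℕ) < n ∧ n ≤ (w i : ℕ))).card)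

noncomputable def jjf (n : ℕ) (w : Equiv.Perm (Fin (2*n))) (k : ℕ) : ℕ :=
  ((((Finset.univ.filter (fun i : Fin (2*n) => (i : ℕ) < n)).image w).sort (· ≤ ·)).map
    (fun x => (x : ℕ) + 1)).getD (k-1) 0

noncomputable def lamf (n : ℕ) (w : Equiv.Perm (Fin (2*n))) (k : ℕ) : ℤ :=
  if jjf n w (n+1-k) ≤ n then (jjf n w (n+1-k) : ℤ) - ((n+1-k : ℕ) : ℤ)
  else (jjf n w (n+1-k) : ℤ) - ((n+1-k : ℕ) : ℤ) - 1

noncomputable def pval (n : ℕ) (w : Equiv.Perm (Fin (2*n))) : ℕ :=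
  ((Finset.Icc 1 n).filter (fun k => n+2 ≤ jjf n w k)).card

noncomputable def lamconj (n : ℕ) (w : Equiv.Perm (Fin (2*n))) (k : ℕ) : ℤ :=
  (((Finset.Icc 1 n).filter (fun i => (k:ℤ) ≤ lamf n w i)).card : ℤ)

namespace StmtAux

variable (n : ℕ) (w : Equiv.Perm (Fin (2*n)))

/-- the set J(w) ⊂ Fin (2n) -/
noncomputable def JS : Finset (Fin (2*n)) :=
  (Finset.univ.filter (fun i : Fin (2*n) => (i : ℕ) < n)).image w

/-- J(w) as a set of naturals in [1, 2n] -/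
noncomputable def Jn : Finset ℕ := (JS n w).image (fun x : Fin (2*n) => (x : ℕ) + 1)

/-- counting function -/
noncomputable def cf (x : ℕ) : ℕ := ((Jn n w).filter (· ≤ x)).card

variable {n w}

lemma mem_JS {x : Fin (2*n)} : x ∈ JS n w ↔ ((w.symm x : ℕ) < n) := by
  simp only [JS, mem_image, mem_filter, mem_univ, true_and]
  constructor
  · rintro ⟨i, hi, rfl⟩; simpa using hi
  · intro h; exact ⟨w.symm x, h, by simp⟩

lemma w_rev (hw : Wcond n w) (i : Fin (2*n)) : w i.rev = (w i).rev := by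
  have := hw i
  have h1 : ((w i.rev : ℕ) + 1) = 2*n - (w i : ℕ) := by
    have := (w i).isLt; omega
  have h2 : ((w i).rev : ℕ) = 2*n - ((w i : ℕ) + 1) := Fin.val_rev _
  apply Fin.ext
  have := (w i).isLt
  omega

lemma rev_mem_JS (hw : Wcond n w) {x : Fin (2*n)} :
    x.rev ∈ JS n w ↔ x ∉ JS n w := by
  have hsymm : w.symm x.rev = (w.symm x).rev := by
    apply w.injective
    rw [Equiv.apply_symm_apply, w_rev hw, Equiv.apply_symm_apply]
  rw [mem_JS, mem_JS, hsymm]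
  have h1 : ((w.symm x).rev : ℕ) = 2*n - ((w.symm x : ℕ) + 1) := Fin.val_rev _
  have h2 := (w.symm x).isLt
  omega

lemma card_JS (hn : 1 ≤ n) : (JS n w).card = n := by
  rw [JS, Finset.card_image_of_injective _ w.injective]
  rw [Finset.card_bij (fun (a : Fin (2*n)) _ => (a : ℕ))
    (t := (Finset.range (2*n)).filter (· < n))]
  · have : Finset.filter (· < n) (Finset.range (2*n)) = Finset.range n := by
      ext a; simp only [Finset.mem_filter, Finset.mem_range]; omega
    rw [this, Finset.card_range]
  · intro a ha; simp only [mem_filter, mem_range]; simp only [mem_filter, mem_univ, true_and] at ha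
    exact ⟨a.isLt, ha⟩
  · intro a _ b _ h; exact Fin.ext h
  · intro b hb; simp only [mem_filter, mem_range] at hb
    exact ⟨⟨b, hb.1⟩, by simp [hb.2], rfl⟩

lemma card_Jn (hn : 1 ≤ n) : (Jn n w).card = n := by
  have hinj : Function.Injective (fun x : Fin (2*n) => (x : ℕ) + 1) := by
    intro a b h
    have h' : (a : ℕ) + 1 = (b : ℕ) + 1 := h
    exact Fin.ext (by omega)
  rw [Jn, Finset.card_image_of_injective _ hinj]
  exact card_JS hn

lemma mem_Jn_subset {y : ℕ} (hy : y ∈ Jn n w) : 1 ≤ y ∧ y ≤ 2*n := by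
  simp only [Jn, mem_image] at hy
  obtain ⟨x, _, rfl⟩ := hy
  have := x.isLt; omega

/-- key complement property: for 1 ≤ y ≤ 2n, y ∈ Jn ↔ 2n+1-y ∉ Jn -/
lemma compl_Jn (hw : Wcond n w) {y : ℕ} (h1 : 1 ≤ y) (h2 : y ≤ 2*n) :
    (y ∈ Jn n w ↔ (2*n+1-y) ∉ Jn n w) := by
  have hmem : ∀ x : Fin (2*n), ((x:ℕ)+1 ∈ Jn n w ↔ x ∈ JS n w) := by
    intro x
    simp only [Jn, mem_image]
    constructor
    · rintro ⟨a, ha, hax⟩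
      have : (a:ℕ) + 1 = (x:ℕ) + 1 := hax
      have : a = x := Fin.ext (by omega)
      rwa [this] at ha
    · intro h; exact ⟨x, h, rfl⟩
  set x0 : Fin (2*n) := ⟨y-1, by omega⟩ with hx0def
  have e1 : (x0 : ℕ) + 1 = y := by simp only [hx0def, Fin.val_mk]; omega
  have e2 : (x0.rev : ℕ) + 1 = 2*n+1-y := by rw [Fin.val_rev]; simp only [hx0def, Fin.val_mk]; omega
  rw [← e2, ← e1, hmem, hmem, rev_mem_JS hw, not_not]


/-- the sorted list underlying jjf -/
noncomputable def ll (n : ℕ) (w : Equiv.Perm (Fin (2*n))) : List ℕ :=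
  (((Finset.univ.filter (fun i : Fin (2*n) => (i : ℕ) < n)).image w).sort (· ≤ ·)).map
    (fun x => (x : ℕ) + 1)

lemma jjf_eq_ll (k : ℕ) : jjf n w k = (ll n w).getD (k-1) 0 := rfl

lemma ll_eq : ll n w = List.map (fun x : Fin (2*n) => (x:ℕ)+1) ((JS n w).sort (·≤·)) := by
  show (((JS n w).sort (·≤·)).map (fun x => (x:ℕ)+1) : List ℕ) = _
  generalize ((JS n w).sort (·≤·)) = l
  induction l with
  | nil => rfl
  | cons a t ih => simpa using ih

lemma ll_length (hn : 1 ≤ n) : (ll n w).length = n := by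
  rw [ll_eq, List.length_map, Finset.length_sort]
  exact card_JS hn

lemma ll_pairwise : (ll n w).Pairwise (· < ·) := by
  have h := (Finset.sortedLT_sort (JS n w)).pairwise
  rw [ll_eq]
  exact List.Pairwise.map _ (fun a b (hab : a < b) => by
    simp only [Fin.lt_def] at hab; omega) h

lemma ll_mem {a : ℕ} : a ∈ ll n w ↔ a ∈ Jn n w := by
  rw [ll_eq, Jn, List.mem_map]
  constructor
  · rintro ⟨x, hx, rfl⟩
    exact Finset.mem_image.mpr ⟨x, (Finset.mem_sort _).mp hx, rfl⟩
  · intro h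
    obtain ⟨x, hx, rfl⟩ := Finset.mem_image.mp h
    exact ⟨x, (Finset.mem_sort _).mpr hx, rfl⟩

lemma jjf_get (hn : 1 ≤ n) {m : ℕ} (h1 : 1 ≤ m) (h2 : m ≤ n) :
    jjf n w m = (ll n w).get ⟨m-1, by rw [ll_length hn]; omega⟩ := by
  rw [jjf_eq_ll, List.getD_eq_getElem _ _ (by rw [ll_length hn]; omega)]
  rfl

lemma jjf_mem (hn : 1 ≤ n) {m : ℕ} (h1 : 1 ≤ m) (h2 : m ≤ n) :
    jjf n w m ∈ Jn n w := by
  rw [jjf_get hn h1 h2, ← ll_mem]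
  exact List.get_mem _ _

lemma jjf_strictmono (hn : 1 ≤ n) {a b : ℕ} (h1 : 1 ≤ a) (h2 : a < b) (h3 : b ≤ n) :
    jjf n w a < jjf n w b := by
  rw [jjf_get hn h1 (by omega), jjf_get hn (by omega) h3]
  exact List.pairwise_iff_get.mp ll_pairwise _ _ (by simp only [Fin.mk_lt_mk]; omega)

lemma jjf_surj (hn : 1 ≤ n) {a : ℕ} (ha : a ∈ Jn n w) :
    ∃ t, 1 ≤ t ∧ t ≤ n ∧ jjf n w t = a := by
  rw [← ll_mem] at ha
  obtain ⟨i, hi⟩ := List.mem_iff_get.mp ha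
  have hlen := ll_length (n := n) (w := w) hn
  have hi2 : (i : ℕ) < n := by have := i.isLt; omega
  refine ⟨(i:ℕ)+1, by omega, by omega, ?_⟩
  rw [jjf_get hn (by omega) (by omega), ← hi]
  congr 1

lemma cf_le_self (x : ℕ) : cf n w x ≤ x := by
  calc cf n w x ≤ (Finset.Icc 1 x).card := Finset.card_le_card (by
        intro a ha
        simp only [cf, Finset.mem_filter] at ha
        simp only [Finset.mem_Icc]
        exact ⟨(mem_Jn_subset ha.1).1, ha.2⟩)
    _ = x := by rw [Nat.card_Icc]; omega

lemma cf_le_n (hn : 1 ≤ n) (x : ℕ) : cf n w x ≤ n := by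
  exact le_trans (Finset.card_le_card (Finset.filter_subset _ _)) (le_of_eq (card_Jn hn))

lemma cf_mono {x y : ℕ} (h : x ≤ y) : cf n w x ≤ cf n w y :=
  Finset.card_le_card (Finset.monotone_filter_right _ (fun a _ (ha : a ≤ x) => le_trans ha h))

lemma cf_top (hn : 1 ≤ n) : cf n w (2*n) = n := by
  rw [cf, Finset.filter_true_of_mem (fun a ha => (mem_Jn_subset ha).2), card_Jn hn]

lemma cf_pred {x : ℕ} (hx : 1 ≤ x) :
    cf n w x = cf n w (x-1) + (if x ∈ Jn n w then 1 else 0) := by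
  have hsplit : (Jn n w).filter (· ≤ x)
      = ((Jn n w).filter (· ≤ x-1)) ∪ ((Jn n w).filter (· = x)) := by
    ext a
    simp only [Finset.mem_filter, Finset.mem_union]
    constructor
    · rintro ⟨h1, h2⟩
      rcases Nat.lt_or_ge a x with h | h
      · exact Or.inl ⟨h1, by omega⟩
      · exact Or.inr ⟨h1, by omega⟩
    · rintro (⟨h1, h2⟩ | ⟨h1, h2⟩) <;> exact ⟨h1, by omega⟩
  have hdisj : Disjoint ((Jn n w).filter (· ≤ x-1)) ((Jn n w).filter (· = x)) := by
    rw [Finset.disjoint_left]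
    intro a ha hb
    simp only [Finset.mem_filter] at ha hb
    omega
  rw [cf, hsplit, Finset.card_union_of_disjoint hdisj, Finset.filter_eq']
  rw [cf]
  congr 1
  split <;> simp

/-- KEY identity : for x ≤ 2n, cf x + n = x + cf (2n - x) -/
lemma cf_key (hn : 1 ≤ n) (hw : Wcond n w) {x : ℕ} (hx : x ≤ 2*n) :
    cf n w x + n = x + cf n w (2*n - x) := by
  classical
  have h1 : ((Finset.Icc 1 x).filter (· ∈ Jn n w)).card = cf n w x := by
    rw [cf]
    congr 1
    ext a
    simp only [Finset.mem_filter, Finset.mem_Icc]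
    constructor
    · rintro ⟨⟨_, h⟩, hJ⟩; exact ⟨hJ, h⟩
    · rintro ⟨hJ, h⟩; exact ⟨⟨(mem_Jn_subset hJ).1, h⟩, hJ⟩
  have h2 : ((Finset.Icc 1 x).filter (· ∈ Jn n w)).card
      + ((Finset.Icc 1 x).filter (fun a => ¬ a ∈ Jn n w)).card = x := by
    rw [Finset.card_filter_add_card_filter_not, Nat.card_Icc]; omega
  have h3 : ((Finset.Icc 1 x).filter (fun a => ¬ a ∈ Jn n w)).card
      = ((Jn n w).filter (fun a => ¬ a ≤ 2*n - x)).card := by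
    apply Finset.card_bij (fun a _ => 2*n + 1 - a)
    · intro a ha
      simp only [Finset.mem_filter, Finset.mem_Icc] at ha
      obtain ⟨⟨ha1, ha2⟩, haJ⟩ := ha
      have hmem : 2*n+1-a ∈ Jn n w := by
        by_contra hc
        exact haJ ((compl_Jn hw ha1 (by omega)).mpr hc)
      simp only [Finset.mem_filter]
      exact ⟨hmem, by omega⟩
    · intro a ha b hb hab
      simp only [Finset.mem_filter, Finset.mem_Icc] at ha hb
      omega
    · intro b hb
      simp only [Finset.mem_filter] at hb
      obtain ⟨hbJ, hble⟩ := hb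
      obtain ⟨hb1, hb2⟩ := mem_Jn_subset hbJ
      refine ⟨2*n+1-b, ?_, by omega⟩
      simp only [Finset.mem_filter, Finset.mem_Icc]
      refine ⟨⟨by omega, by omega⟩, ?_⟩
      intro hc
      have := (compl_Jn hw (by omega : 1 ≤ 2*n+1-b) (by omega)).mp hc
      have : 2*n+1-(2*n+1-b) = b := by omega
      simp_all
  have h4 : cf n w (2*n - x) + ((Jn n w).filter (fun a => ¬ a ≤ 2*n - x)).card = n := by
    rw [cf, Finset.card_filter_add_card_filter_not, card_Jn hn]
  omega

lemma jjf_mono (hn : 1 ≤ n) {a b : ℕ} (h1 : 1 ≤ a) (h2 : a ≤ b) (h3 : b ≤ n) :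
    jjf n w a ≤ jjf n w b := by
  rcases eq_or_lt_of_le h2 with h | h
  · rw [h]
  · exact le_of_lt (jjf_strictmono hn h1 h h3)

/-- central characterization : jjf m ≤ x ↔ m ≤ cf x -/
lemma charC (hn : 1 ≤ n) {m x : ℕ} (h1 : 1 ≤ m) (h2 : m ≤ n) :
    jjf n w m ≤ x ↔ m ≤ cf n w x := by
  classical
  constructor
  · intro h
    have himg : (Finset.Icc 1 m).image (jjf n w) ⊆ (Jn n w).filter (· ≤ x) := by
      intro a ha
      obtain ⟨t, ht, rfl⟩ := Finset.mem_image.mp ha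
      rw [Finset.mem_Icc] at ht
      exact Finset.mem_filter.mpr ⟨jjf_mem hn ht.1 (le_trans ht.2 h2),
        le_trans (jjf_mono hn ht.1 ht.2 h2) h⟩
    have hinj : Set.InjOn (jjf n w) (Finset.Icc 1 m) := by
      intro a ha b hb hab
      simp only [Finset.coe_Icc, Set.mem_Icc] at ha hb
      by_contra hne
      rcases lt_or_gt_of_ne hne with hlt | hlt
      · exact absurd hab (ne_of_lt (jjf_strictmono hn ha.1 hlt (le_trans hb.2 h2)))
      · exact absurd hab.symm (ne_of_lt (jjf_strictmono hn hb.1 hlt (le_trans ha.2 h2)))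
    calc m = (Finset.Icc 1 m).card := by rw [Nat.card_Icc]; omega
      _ = ((Finset.Icc 1 m).image (jjf n w)).card := (Finset.card_image_of_injOn hinj).symm
      _ ≤ cf n w x := Finset.card_le_card himg
  · intro h
    by_contra hlt
    push_neg at hlt
    have hsub : (Jn n w).filter (· ≤ x) ⊆ (Finset.Icc 1 (m-1)).image (jjf n w) := by
      intro a ha
      obtain ⟨haJ, hax⟩ := Finset.mem_filter.mp ha
      obtain ⟨t, ht1, ht2, rfl⟩ := jjf_surj hn haJ
      refine Finset.mem_image.mpr ⟨t, Finset.mem_Icc.mpr ⟨ht1, ?_⟩, rfl⟩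
      by_contra hc
      have htm : m ≤ t := by omega
      exact absurd (le_trans (jjf_mono hn h1 htm ht2) hax) (not_le.mpr hlt)
    have : cf n w x ≤ m - 1 := by
      calc cf n w x ≤ ((Finset.Icc 1 (m-1)).image (jjf n w)).card := Finset.card_le_card hsub
        _ ≤ (Finset.Icc 1 (m-1)).card := Finset.card_image_le
        _ = m - 1 := by rw [Nat.card_Icc]; omega
    omega

lemma cf_jjf (hn : 1 ≤ n) {m : ℕ} (h1 : 1 ≤ m) (h2 : m ≤ n) :
    cf n w (jjf n w m) = m := by
  have hge : m ≤ cf n w (jjf n w m) := (charC hn h1 h2).mp le_rfl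
  have hle : cf n w (jjf n w m) ≤ m := by
    rcases eq_or_lt_of_le h2 with h | h
    · rw [h]; exact cf_le_n hn _
    · by_contra hc
      push_neg at hc
      have := (charC hn (by omega : 1 ≤ m+1) (by omega : m+1 ≤ n)).mpr hc
      exact absurd this (not_le.mpr (jjf_strictmono hn h1 (by omega) (by omega)))
  omega

lemma parity_upper (hn : 1 ≤ n) (hpar : Wpar n w) : Even (n - cf n w n) := by
  classical
  have hcard : ((Jn n w).filter (fun a => ¬ a ≤ n)).card = n - cf n w n := by
    have := Finset.card_filter_add_card_filter_not (s := Jn n w) (p := (· ≤ n))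
    rw [card_Jn hn] at this
    have h2 : ((Jn n w).filter (· ≤ n)).card = cf n w n := rfl
    omega
  have hbij : ((Finset.univ.filter (fun i : Fin (2*n) => (i : ℕ) < n ∧ n ≤ (w i : ℕ))).card)
      = ((Jn n w).filter (fun a => ¬ a ≤ n)).card := by
    apply Finset.card_bij (fun i _ => ((w i : ℕ) + 1))
    · intro i hi
      simp only [Finset.mem_filter, Finset.mem_univ, true_and] at hi
      refine Finset.mem_filter.mpr ⟨?_, by omega⟩
      exact Finset.mem_image.mpr ⟨w i, Finset.mem_image.mpr ⟨i, by simp [hi.1], rfl⟩, rfl⟩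
    · intro a ha b hb hab
      exact w.injective (Fin.ext (by omega))
    · intro b hb
      obtain ⟨hbJ, hble⟩ := Finset.mem_filter.mp hb
      obtain ⟨x, hx, rfl⟩ := Finset.mem_image.mp hbJ
      obtain ⟨i, hi, rfl⟩ := Finset.mem_image.mp hx
      simp only [Finset.mem_filter, Finset.mem_univ, true_and] at hi
      exact ⟨i, Finset.mem_filter.mpr ⟨Finset.mem_univ _, hi, by omega⟩, rfl⟩
  rw [Wpar, hbij, hcard] at hpar
  exact hpar

lemma pval_cf (hn : 1 ≤ n) : pval n w + cf n w (n+1) = n := by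
  classical
  have hfc : (Finset.Icc 1 n).filter (fun k => n+2 ≤ jjf n w k)
      = (Finset.Icc 1 n).filter (fun k => ¬ k ≤ cf n w (n+1)) := by
    apply Finset.filter_congr
    intro k hk
    rw [Finset.mem_Icc] at hk
    have := charC (n := n) (w := w) hn hk.1 hk.2 (x := n+1)
    omega
  have hc1 : cf n w (n+1) ≤ n := cf_le_n hn _
  have hpos : ((Finset.Icc 1 n).filter (fun k => k ≤ cf n w (n+1))).card = cf n w (n+1) := by
    have : (Finset.Icc 1 n).filter (fun k => k ≤ cf n w (n+1))
        = Finset.Icc 1 (cf n w (n+1)) := by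
      ext a
      simp only [Finset.mem_filter, Finset.mem_Icc]
      omega
    rw [this, Nat.card_Icc]; omega
  have := Finset.card_filter_add_card_filter_not
    (s := Finset.Icc 1 n) (p := fun k => k ≤ cf n w (n+1))
  rw [Nat.card_Icc] at this
  rw [pval, hfc]
  omega

lemma cf_n1_pos (hn : 1 ≤ n) : 1 ≤ cf n w (n+1) := by
  by_contra hc
  push_neg at hc
  have hsub : Jn n w ⊆ Finset.Icc (n+2) (2*n) := by
    intro a ha
    have hb := mem_Jn_subset ha
    rw [Finset.mem_Icc]
    refine ⟨?_, hb.2⟩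
    by_contra h2
    have : a ∈ (Jn n w).filter (· ≤ n+1) := Finset.mem_filter.mpr ⟨ha, by omega⟩
    have : 1 ≤ cf n w (n+1) := Finset.card_pos.mpr ⟨a, this⟩
    omega
  have := Finset.card_le_card hsub
  rw [card_Jn hn, Nat.card_Icc] at this
  omega

lemma pval_le (hn : 1 ≤ n) : pval n w ≤ n - 1 := by
  have := pval_cf (n := n) (w := w) hn
  have := cf_n1_pos (n := n) (w := w) hn
  omega

lemma mem_n_iff (hn : 1 ≤ n) (hw : Wcond n w) : (n ∈ Jn n w) ↔ (n+1 ∉ Jn n w) := by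
  have h := compl_Jn hw (y := n) hn (by omega)
  have : 2*n+1-n = n+1 := by omega
  rwa [this] at h

lemma n1_mem_iff (hn : 1 ≤ n) (hw : Wcond n w) (hpar : Wpar n w) :
    ((n+1 ∈ Jn n w) ↔ Odd (pval n w)) := by
  classical
  have he := parity_upper hn hpar
  have hp := pval_cf (n := n) (w := w) hn
  have hcp : cf n w (n+1) = cf n w n + (if n+1 ∈ Jn n w then 1 else 0) := by
    have := cf_pred (n := n) (w := w) (x := n+1) (by omega)
    simpa using this
  have hcn : cf n w n ≤ n := cf_le_n hn _
  have hc1 : cf n w (n+1) ≤ n := cf_le_n hn _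
  rw [Nat.even_iff] at he
  rw [Nat.odd_iff]
  by_cases hmem : n+1 ∈ Jn n w <;> simp only [hmem, if_true, if_false] at hcp <;>
    simp only [hmem, true_iff, false_iff] <;> omega

lemma cf_nm1 (hn : 1 ≤ n) (hw : Wcond n w) (hpar : Wpar n w) :
    cf n w (n-1) = n - pval n w - 1 := by
  classical
  have hp := pval_cf (n := n) (w := w) hn
  have hcp : cf n w (n+1) = cf n w n + (if n+1 ∈ Jn n w then 1 else 0) := by
    have := cf_pred (n := n) (w := w) (x := n+1) (by omega)
    simpa using this
  have hcn : cf n w n = cf n w (n-1) + (if n ∈ Jn n w then 1 else 0) := cf_pred hn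
  have hiff := mem_n_iff hn hw
  have hc1 := cf_n1_pos (n := n) (w := w) hn
  by_cases hmem : n+1 ∈ Jn n w
  · have hn' : n ∉ Jn n w := by rw [hiff] at *; tauto
    simp only [hmem, hn', if_true, if_false] at hcp hcn
    omega
  · have hn' : n ∈ Jn n w := by rw [hiff]; exact hmem
    simp only [hmem, hn', if_true, if_false] at hcp hcn
    omega

lemma jjf_np (hn : 1 ≤ n) (hw : Wcond n w) (hpar : Wpar n w) :
    jjf n w (n - pval n w) = n + (if n+1 ∈ Jn n w then 1 else 0) := by
  classical
  have hp := pval_cf (n := n) (w := w) hn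
  have hc1 := cf_n1_pos (n := n) (w := w) hn
  have hcp : cf n w (n+1) = cf n w n + (if n+1 ∈ Jn n w then 1 else 0) := by
    have := cf_pred (n := n) (w := w) (x := n+1) (by omega)
    simpa using this
  have hcm := cf_nm1 hn hw hpar
  have h1 : 1 ≤ n - pval n w := by omega
  have h2 : n - pval n w ≤ n := by omega
  by_cases hmem : n+1 ∈ Jn n w
  · simp only [hmem, if_true] at hcp ⊢
    have hle : jjf n w (n - pval n w) ≤ n+1 :=
      (charC hn h1 h2).mpr (by omega)
    have hgt : ¬ jjf n w (n - pval n w) ≤ n := by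
      rw [charC hn h1 h2]
      omega
    omega
  · simp only [hmem, if_false] at hcp ⊢
    have hle : jjf n w (n - pval n w) ≤ n :=
      (charC hn h1 h2).mpr (by omega)
    have hgt : ¬ jjf n w (n - pval n w) ≤ n - 1 := by
      rw [charC hn h1 h2]
      omega
    omega

lemma jjf_small (hn : 1 ≤ n) (hw : Wcond n w) (hpar : Wpar n w) {m : ℕ}
    (h1 : 1 ≤ m) (h2 : m ≤ n - pval n w - 1) : jjf n w m ≤ n - 1 := by
  have hcm := cf_nm1 hn hw hpar
  exact (charC hn h1 (by omega)).mpr (by omega)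

lemma jjf_big_iff (hn : 1 ≤ n) {m : ℕ} (h1 : 1 ≤ m) (h2 : m ≤ n) :
    (n+2 ≤ jjf n w m ↔ n - pval n w + 1 ≤ m) := by
  have hp := pval_cf (n := n) (w := w) hn
  have := charC (n := n) (w := w) hn h1 h2 (x := n+1)
  omega

lemma jjf_ge_self (hn : 1 ≤ n) {m : ℕ} (h1 : 1 ≤ m) (h2 : m ≤ n) : m ≤ jjf n w m := by
  by_contra hc
  push_neg at hc
  have : m ≤ cf n w (m-1) := (charC hn h1 h2).mp (by omega)
  have := cf_le_self (n := n) (w := w) (m-1)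
  omega

lemma jjf_le_add (hn : 1 ≤ n) (hw : Wcond n w) {m : ℕ} (h1 : 1 ≤ m) (h2 : m ≤ n) :
    jjf n w m ≤ n + m := by
  have hkey := cf_key hn hw (x := n + m) (by omega)
  have h2n : 2*n - (n+m) = n - m := by omega
  rw [h2n] at hkey
  exact (charC hn h1 h2).mpr (by omega)

end StmtAux

namespace StmtAux

/-- natural-number version of lamf -/
noncomputable def lamn (n : ℕ) (w : Equiv.Perm (Fin (2*n))) (k : ℕ) : ℕ :=
  if jjf n w (n+1-k) ≤ n then jjf n w (n+1-k) - (n+1-k)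
  else jjf n w (n+1-k) - (n+1-k) - 1

variable {n : ℕ} {w : Equiv.Perm (Fin (2*n))}

lemma lamf_eq (hn : 1 ≤ n) {k : ℕ} (h1 : 1 ≤ k) (h2 : k ≤ n) :
    lamf n w k = (lamn n w k : ℤ) := by
  have hm1 : 1 ≤ n+1-k := by omega
  have hm2 : n+1-k ≤ n := by omega
  have hge := jjf_ge_self (w := w) hn hm1 hm2
  rw [lamf, lamn]
  split_ifs with h <;> push_cast <;> omega

lemma lamn_anti_adj (hn : 1 ≤ n) (hw : Wcond n w) {k : ℕ} (h1 : 1 ≤ k) (h2 : k ≤ n-1) :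
    lamn n w (k+1) ≤ lamn n w k := by
  have e1 : n+1-(k+1) = n-k := by omega
  have e2 : n+1-k = (n-k)+1 := by omega
  simp only [lamn, e1, e2]
  have hlt : jjf n w (n-k) < jjf n w (n-k+1) :=
    jjf_strictmono hn (by omega) (by omega) (by omega)
  have hnot : ¬ (jjf n w (n-k) = n ∧ jjf n w (n-k+1) = n+1) := by
    rintro ⟨ha, hb⟩
    have hmemn : n ∈ Jn n w := by
      have h := jjf_mem (w := w) (m := n-k) hn (by omega) (by omega)
      rwa [ha] at h
    have hmem1 : n+1 ∈ Jn n w := by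
      have h := jjf_mem (w := w) (m := n-k+1) hn (by omega) (by omega)
      rwa [hb] at h
    exact (mem_n_iff hn hw).mp hmemn hmem1
  have hg1 : n-k ≤ jjf n w (n-k) := jjf_ge_self hn (by omega) (by omega)
  split_ifs <;> omega

lemma lamn_anti (hn : 1 ≤ n) (hw : Wcond n w) {a b : ℕ} (h1 : 1 ≤ a) (h2 : a ≤ b)
    (h3 : b ≤ n) : lamn n w b ≤ lamn n w a := by
  induction b with
  | zero => omega
  | succ b ih =>
    rcases Nat.eq_or_lt_of_le h2 with h | h
    · rw [h]
    · exact le_trans (lamn_anti_adj hn hw (by omega) (by omega)) (ih (by omega) (by omega))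

lemma count_eq (hn : 1 ≤ n) (hw : Wcond n w) {k q : ℕ} (hk : 1 ≤ k) (hq : q ≤ n)
    (hA : 1 ≤ q → k ≤ lamn n w q) (hB : q < n → lamn n w (q+1) < k) :
    ((Finset.Icc 1 n).filter (fun i => k ≤ lamn n w i)).card = q := by
  have hset : (Finset.Icc 1 n).filter (fun i => k ≤ lamn n w i) = Finset.Icc 1 q := by
    ext i
    simp only [Finset.mem_filter, Finset.mem_Icc]
    constructor
    · rintro ⟨⟨hi1, hi2⟩, hik⟩
      refine ⟨hi1, ?_⟩
      by_contra hc
      push_neg at hc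
      have hle : lamn n w i ≤ lamn n w (q+1) := lamn_anti hn hw (by omega) (by omega) hi2
      have := hB (by omega)
      omega
    · rintro ⟨hi1, hi2⟩
      refine ⟨⟨hi1, by omega⟩, ?_⟩
      have hle : lamn n w q ≤ lamn n w i := lamn_anti hn hw hi1 hi2 hq
      have := hA (by omega)
      omega
  rw [hset, Nat.card_Icc]
  omega

lemma lamconj_eq (hn : 1 ≤ n) {k : ℕ} :
    lamconj n w k = (((Finset.Icc 1 n).filter (fun i => k ≤ lamn n w i)).card : ℤ) := by
  rw [lamconj]
  have hset : (Finset.Icc 1 n).filter (fun i => (k:ℤ) ≤ lamf n w i)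
      = (Finset.Icc 1 n).filter (fun i => k ≤ lamn n w i) := by
    apply Finset.filter_congr
    intro i hi
    rw [Finset.mem_Icc] at hi
    rw [lamf_eq hn hi.1 hi.2]
    norm_cast
  rw [hset]

/-- part 2 of the theorem -/
lemma part2 (hn : 1 ≤ n) (hw : Wcond n w) (hpar : Wpar n w) :
    lamn n w (pval n w + 1) = pval n w := by
  classical
  have hple := pval_le (n := n) (w := w) hn
  have e : n+1-(pval n w + 1) = n - pval n w := by omega
  rw [lamn, e, jjf_np hn hw hpar]
  by_cases hmem : n+1 ∈ Jn n w <;>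
    simp only [hmem, if_true, if_false] <;> split_ifs <;> omega

/-- part 1 of the theorem -/
lemma part1 (hn : 1 ≤ n) (hw : Wcond n w) (hpar : Wpar n w) {k : ℕ}
    (hk1 : 1 ≤ k) (hk2 : k ≤ pval n w) :
    ((Finset.Icc 1 n).filter (fun i => k ≤ lamn n w i)).card = lamn n w k + 1 := by
  classical
  have hple := pval_le (n := n) (w := w) hn
  set m := n+1-k with hm
  have hm1 : n - pval n w + 1 ≤ m := by omega
  have hm2 : m ≤ n := by omega
  have hm0 : 1 ≤ m := by omega
  have hbig : n+2 ≤ jjf n w m := (jjf_big_iff hn hm0 hm2).mpr hm1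
  have hub : jjf n w m ≤ n + m := jjf_le_add hn hw hm0 hm2
  have h2n : jjf n w m ≤ 2*n := (mem_Jn_subset (jjf_mem hn hm0 hm2)).2
  -- lamn k value
  have hlamk : lamn n w k = jjf n w m - m - 1 := by
    rw [lamn, ← hm, if_neg (by omega)]
  set q := lamn n w k + 1 with hqdef
  have hq1 : 1 ≤ q := by omega
  have hqn : q ≤ n := by omega
  set m' := n+1+m - jjf n w m with hm'
  have hm'1 : 1 ≤ m' := by omega
  have hm'n : m' ≤ n := by omega
  -- counting facts
  have hcfj : cf n w (jjf n w m) = m := cf_jjf hn hm0 hm2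
  have hcfp : cf n w (jjf n w m) = cf n w (jjf n w m - 1)
      + (if jjf n w m ∈ Jn n w then 1 else 0) := cf_pred (by omega)
  rw [if_pos (jjf_mem hn hm0 hm2)] at hcfp
  have hynot : (2*n+1 - jjf n w m) ∉ Jn n w :=
    (compl_Jn hw (by omega) h2n).mp (jjf_mem hn hm0 hm2)
  have hkey := cf_key hn hw (x := jjf n w m - 1) (by omega)
  have e2 : 2*n - (jjf n w m - 1) = 2*n+1 - jjf n w m := by omega
  rw [e2] at hkey
  -- cf y = m' - 1
  have hcfy : cf n w (2*n+1 - jjf n w m) = m' - 1 := by omega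
  -- hA : k ≤ lamn q
  have hA : k ≤ lamn n w q := by
    have e3 : n+1-q = m' := by omega
    rw [lamn, e3]
    have hgt : ¬ jjf n w m' ≤ 2*n+1 - jjf n w m := by
      rw [charC hn hm'1 hm'n]
      omega
    split_ifs <;> omega
  -- hB : q < n → lamn (q+1) < k
  have hB : q < n → lamn n w (q+1) < k := by
    intro hqlt
    have e4 : n+1-(q+1) = m' - 1 := by omega
    rw [lamn, e4]
    have hm''1 : 1 ≤ m' - 1 := by omega
    have hle : jjf n w (m'-1) ≤ 2*n+1 - jjf n w m := by
      rw [charC hn hm''1 (by omega)]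
      omega
    have hne : jjf n w (m'-1) ≠ 2*n+1 - jjf n w m := by
      intro hc
      exact hynot (hc ▸ jjf_mem hn hm''1 (by omega))
    split_ifs <;> omega
  exact count_eq hn hw hk1 hqn (fun _ => hA) hB

/-- part 3 of the theorem -/
lemma part3 (hn : 1 ≤ n) (hw : Wcond n w) (hpar : Wpar n w) {k : ℕ}
    (hk1 : pval n w + 1 ≤ k) (hk2 : k ≤ n - 1) :
    ((Finset.Icc 1 n).filter (fun i => k ≤ lamn n w i)).card = lamn n w (k+1) := by
  classical
  have hple := pval_le (n := n) (w := w) hn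
  have hn2 : 2 ≤ n := by omega
  set m₀ := n - k with hm₀
  have hm₀1 : 1 ≤ m₀ := by omega
  have hm₀2 : m₀ ≤ n - pval n w - 1 := by omega
  have hsmall : jjf n w m₀ ≤ n - 1 := jjf_small hn hw hpar hm₀1 hm₀2
  have hlb : m₀ ≤ jjf n w m₀ := jjf_ge_self hn hm₀1 (by omega)
  -- lamn (k+1) value
  have hlamk : lamn n w (k+1) = jjf n w m₀ - m₀ := by
    have e : n+1-(k+1) = m₀ := by omega
    rw [lamn, e, if_pos (by omega)]
  set q := lamn n w (k+1) with hqdef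
  have hqn : q ≤ n - 1 := by omega
  set ms := n + m₀ - jjf n w m₀ with hms
  have hms1 : 1 ≤ ms := by omega
  have hmsn : ms ≤ n := by omega
  -- counting facts
  have hcfj : cf n w (jjf n w m₀) = m₀ := cf_jjf hn hm₀1 (by omega)
  have hcfp : cf n w (jjf n w m₀) = cf n w (jjf n w m₀ - 1)
      + (if jjf n w m₀ ∈ Jn n w then 1 else 0) := cf_pred (by omega)
  rw [if_pos (jjf_mem hn hm₀1 (by omega))] at hcfp
  have hynot : (2*n+1 - jjf n w m₀) ∉ Jn n w :=
    (compl_Jn hw (by omega) (by omega)).mp (jjf_mem hn hm₀1 (by omega))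
  have hkey := cf_key hn hw (x := jjf n w m₀ - 1) (by omega)
  have e2 : 2*n - (jjf n w m₀ - 1) = 2*n+1 - jjf n w m₀ := by omega
  rw [e2] at hkey
  have hcfy : cf n w (2*n+1 - jjf n w m₀) = ms := by omega
  -- hA
  have hA : 1 ≤ q → k ≤ lamn n w q := by
    intro hq1
    have e3 : n+1-q = ms + 1 := by omega
    rw [lamn, e3]
    have hgt : ¬ jjf n w (ms+1) ≤ 2*n+1 - jjf n w m₀ := by
      rw [charC hn (by omega) (by omega)]
      omega
    split_ifs <;> omega
  -- hB
  have hB : q < n → lamn n w (q+1) < k := by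
    intro _
    have e4 : n+1-(q+1) = ms := by omega
    rw [lamn, e4]
    have hle : jjf n w ms ≤ 2*n+1 - jjf n w m₀ := by
      rw [charC hn hms1 hmsn]
      omega
    have hne : jjf n w ms ≠ 2*n+1 - jjf n w m₀ := by
      intro hc
      exact hynot (hc ▸ jjf_mem hn hms1 hmsn)
    split_ifs <;> omega
  exact count_eq hn hw (by omega) (by omega) hA hB

end StmtAux

theorem stmt10 (n : ℕ) (hn : 1 ≤ n) (w : Equiv.Perm (Fin (2*n)))
    (hw : Wcond n w) (hpar : Wpar n w) :
    (∀ k, 1 ≤ k → k ≤ pval n w → lamconj n w k = lamf n w k + 1) ∧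
    lamf n w (pval n w + 1) = (pval n w : ℤ) ∧
    (∀ k, pval n w + 1 ≤ k → k ≤ n - 1 → lamconj n w k = lamf n w (k+1)) := by
  have hple := StmtAux.pval_le (n := n) (w := w) hn
  refine ⟨?_, ?_, ?_⟩
  · intro k h1 h2
    rw [StmtAux.lamconj_eq hn, StmtAux.part1 hn hw hpar h1 h2,
      StmtAux.lamf_eq hn h1 (by omega)]
    push_cast
    ring
  · rw [StmtAux.lamf_eq hn (by omega) (by omega), StmtAux.part2 hn hw hpar]
  · intro k h1 h2
    rw [StmtAux.lamconj_eq hn, StmtAux.part3 hn hw hpar h1 h2,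
      StmtAux.lamf_eq hn (by omega) (by omega)]
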